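/- Every indecomposable braided rack is faithful, i.e., if X is a braided rack whose inner group acts transitively on X, then the map x ↦ φ_x from X to the symmetric group of X is injective. -/

import Mathlib

structure Rack' (X : Type*) where
  act : X → X → X
  act_bijective : ∀ x, Function.Bijective (act x)
  self_distrib : ∀ x y z, act x (act y z) = act (act x y) (act x z)

namespace Rack'

variable {X : Type*} (R : Rack' X)

/-- The left translation `φ_x : y ↦ x ▷ y` as a permutation of `X`. -/
noncomputable def phi (x : X) : Equiv.Perm X :=
  Equiv.ofBijective (R.act x) (R.act_bijective x)

@[simp] theorem phi_apply (x y : X) : R.phi x y = R.act x y := rfl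

/-- A quandle is a rack with `x ▷ x = x`. -/
def IsQuandle : Prop := ∀ x, R.act x x = x

/-- A rack is braided if it is a quandle and for all `x, y` at least one of
`x ▷ (y ▷ x) = y` and `x ▷ y = y` holds. -/
def IsBraided : Prop :=
  R.IsQuandle ∧ ∀ x y, R.act x (R.act y x) = y ∨ R.act x y = y

/-- The inner group of a rack: the subgroup of the symmetric group generated by all
left translations. -/
def innerGroup : Subgroup (Equiv.Perm X) :=
  Subgroup.closure (Set.range fun x => R.phi x)

/-- A rack is indecomposable if its inner group acts transitively. -/
def IsIndecomposable : Prop := ∀ x y : X, ∃ g ∈ R.innerGroup, g x = y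

/-- A subrack: a nonempty subset closed under the operation which is itself a rack
under the restricted operation. -/
def IsSubrack (Y : Set X) : Prop :=
  Y.Nonempty ∧ (∀ x ∈ Y, ∀ y ∈ Y, R.act x y ∈ Y) ∧
    ∀ x ∈ Y, ∀ y ∈ Y, ∃ z ∈ Y, R.act x z = y

/-- The first Hurwitz braid `σ₁(x,y,z) = (x ▷ y, x, z)`. -/
noncomputable def sigma1 : Equiv.Perm (X × X × X) :=
  Equiv.ofBijective (fun p => (R.act p.1 p.2.1, p.1, p.2.2)) (by
    constructor
    · rintro ⟨a, b, c⟩ ⟨a', b', c'⟩ h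
      simp only [Prod.mk.injEq] at h
      obtain ⟨h1, rfl, rfl⟩ := h
      obtain rfl := (R.act_bijective a).1 h1
      rfl
    · rintro ⟨u, v, w⟩
      refine ⟨(v, (R.phi v).symm u, w), ?_⟩
      have h : R.act v ((R.phi v).symm u) = u := (R.phi v).apply_symm_apply u
      simp [h])

/-- The second Hurwitz braid `σ₂(x,y,z) = (x, y ▷ z, y)`. -/
noncomputable def sigma2 : Equiv.Perm (X × X × X) :=
  Equiv.ofBijective (fun p => (p.1, R.act p.2.1 p.2.2, p.2.1)) (by
    constructor
    · rintro ⟨a, b, c⟩ ⟨a', b', c'⟩ h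
      simp only [Prod.mk.injEq] at h
      obtain ⟨rfl, h1, rfl⟩ := h
      obtain rfl := (R.act_bijective b).1 h1
      rfl
    · rintro ⟨u, v, w⟩
      refine ⟨(u, w, (R.phi w).symm v), ?_⟩
      have h : R.act w ((R.phi w).symm v) = v := (R.phi w).apply_symm_apply v
      simp [h])

/-- The subgroup of the symmetric group of `X³` generated by the two Hurwitz braids. -/
def hurwitzGroup : Subgroup (Equiv.Perm (X × X × X)) :=
  Subgroup.closure {R.sigma1, R.sigma2}

/-- The Hurwitz orbit of a triple. -/
def hurwitzOrbit (p : X × X × X) : Set (X × X × X) :=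
  {q | ∃ g ∈ R.hurwitzGroup, g p = q}

/-- A subset of `X³` is a Hurwitz orbit if it is the Hurwitz orbit of some triple. -/
def IsHurwitzOrbit (O : Set (X × X × X)) : Prop := ∃ p, O = R.hurwitzOrbit p

/-- A quarantine of a Hurwitz orbit `O`: a nonempty subset `Q ⊆ O` such that for every
triple `(x,y,z) ∈ O`, if two of `(x,y,z)`, `(x, y▷z, y)`, `(x▷(y▷z), x, y)` lie in `Q`
then so does the third. -/
def IsQuarantine (O Q : Set (X × X × X)) : Prop :=
  Q.Nonempty ∧ Q ⊆ O ∧ ∀ p ∈ O,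
    ((p ∈ Q ∧ R.sigma2 p ∈ Q) → R.sigma1 (R.sigma2 p) ∈ Q) ∧
    ((p ∈ Q ∧ R.sigma1 (R.sigma2 p) ∈ Q) → R.sigma2 p ∈ Q) ∧
    ((R.sigma2 p ∈ Q ∧ R.sigma1 (R.sigma2 p) ∈ Q) → p ∈ Q)

/-- A plague of a Hurwitz orbit `O`: a subset `P ⊆ O` whose smallest containing
quarantine is `O` itself. -/
def IsPlague (O P : Set (X × X × X)) : Prop :=
  P.Nonempty ∧ P ⊆ O ∧ ∀ Q, R.IsQuarantine O Q → P ⊆ Q → Q = O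

/-- Two racks are isomorphic if there is a bijection respecting the operations. -/
def IsIsomorphic {Y : Type*} (S : Rack' Y) : Prop :=
  ∃ f : X ≃ Y, ∀ a b, f (R.act a b) = S.act (f a) (f b)

end Rack'

/-- Every indecomposable braided rack is faithful: the map `x ↦ φ_x` is injective. -/
theorem braided_indecomposable_faithful {X : Type*} (R : Rack' X)
    (hR : R.IsBraided) (hInd : R.IsIndecomposable) :
    Function.Injective R.phi := by
  obtain ⟨hQ, hBr⟩ := hR
  have pair : ∀ u v : X, R.phi u = R.phi v → R.act u v = v := by
    intro u v h
    have hfun : ∀ w, R.act u w = R.act v w := fun w => by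
      rw [← R.phi_apply, h, R.phi_apply]
    rcases hBr u v with h1 | h1
    · have hvu : R.act v u = u := by rw [← hfun, hQ]
      rw [hvu] at h1
      have huv : u = v := by rw [← h1, hQ]
      subst huv
      exact hQ u
    · exact h1
  have conj : ∀ a b : X, R.phi (R.act a b) * R.phi a = R.phi a * R.phi b := by
    intro a b; ext w
    simp [Equiv.Perm.mul_apply, ← R.self_distrib]
  intro x y hxy
  by_contra hne
  have hfun : ∀ w, R.act x w = R.act y w := fun w => by
    rw [← R.phi_apply, hxy, R.phi_apply]
  have key : ∀ z, R.act z x = x ∨ R.act z y = y := by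
    intro z
    rcases hBr z x with h1 | h1
    · rcases hBr z y with h2 | h2
      · exact absurd (by rw [← h1, hfun z, h2]) hne
      · exact Or.inr h2
    · exact Or.inl h1
  have comm : ∀ z : X, R.phi x * R.phi z = R.phi z * R.phi x := by
    intro z
    rcases key z with hc | hc
    · have h2 := conj z x
      rw [hc] at h2
      exact h2
    · have h2 := conj z y
      rw [hc] at h2
      rw [hxy]
      exact h2
  have gen_inv : ∀ z u : X, R.phi u = R.phi x → R.phi (R.act z u) = R.phi x := by
    intro z u hu
    have h1 := conj z u
    rw [hu] at h1
    have h2 : R.phi (R.act z u) * R.phi z = R.phi x * R.phi z := by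
      rw [h1, ← comm z]
    exact mul_right_cancel h2
  have inv_inv : ∀ z u : X, R.phi u = R.phi x → R.phi ((R.phi z)⁻¹ u) = R.phi x := by
    intro z u hu
    have hzv : R.act z ((R.phi z)⁻¹ u) = u := by
      rw [← R.phi_apply, Equiv.Perm.inv_def, Equiv.apply_symm_apply]
    have h1 := conj z ((R.phi z)⁻¹ u)
    rw [hzv, hu] at h1
    have h2 : R.phi z * R.phi ((R.phi z)⁻¹ u) = R.phi z * R.phi x := by
      rw [← h1, comm z]
    exact mul_left_cancel h2
  have F_inv : ∀ g ∈ R.innerGroup, ∀ u : X, (R.phi u = R.phi x ↔ R.phi (g u) = R.phi x) := by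
    intro g hg
    refine Subgroup.closure_induction
      (p := fun g _ => ∀ u : X, (R.phi u = R.phi x ↔ R.phi (g u) = R.phi x))
      ?_ ?_ ?_ ?_ hg
    · rintro _ ⟨z, rfl⟩ u
      constructor
      · exact gen_inv z u
      · intro h
        have := inv_inv z (R.phi z u) h
        rwa [Equiv.Perm.inv_def, Equiv.symm_apply_apply] at this
    · intro u; simp
    · intro a b _ _ ha hb u
      rw [Equiv.Perm.mul_apply]
      exact (hb u).trans (ha (b u))
    · intro a _ ha u
      have h := ha (a⁻¹ u)
      rw [Equiv.Perm.inv_def, Equiv.apply_symm_apply] at h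
      exact h.symm
  -- every phi z equals phi x
  have all_eq : ∀ z : X, R.phi z = R.phi x := by
    intro z
    obtain ⟨g, hg, hgx⟩ := hInd x z
    have := (F_inv g hg x).mp rfl
    rwa [hgx] at this
  -- all actions trivial
  have triv : ∀ u v : X, R.act u v = v := fun u v =>
    pair u v ((all_eq u).trans (all_eq v).symm)
  have phi_one : ∀ u : X, R.phi u = 1 := by
    intro u; ext w; simp [triv]
  have g_one : ∀ g ∈ R.innerGroup, g = 1 := by
    intro g hg
    refine Subgroup.closure_induction (p := fun g _ => g = 1) ?_ rfl ?_ ?_ hg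
    · rintro _ ⟨z, rfl⟩; exact phi_one z
    · rintro a b _ _ rfl rfl; simp
    · rintro a _ rfl; simp
  obtain ⟨g, hg, hgx⟩ := hInd x y
  rw [g_one g hg] at hgx
  exact hne hgx
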